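/- Let B be a category with pullbacks in which regular epimorphisms are stable under pullback. Let f : X ⟶ Y be a morphism admitting a factorization f = e ≫ m where e : X ⟶ I is a regular epimorphism and m : I ⟶ Y is a monomorphism. Then for every morphism h : Z ⟶ Y, the base change of f along h (the pullback projection pullback f h ⟶ Z) is a regular epimorphism if and only if h factors through m, i.e., there exists k : Z ⟶ I with k ≫ m = h. -/

import Mathlib

open CategoryTheory Limits

/-- Precomposing a regular epi with an isomorphism gives a regular epi. -/
noncomputable def regularEpiIsoComp {C : Type*} [Category C] {A' A B : C} (i : A' ⟶ A) [IsIso i]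
    (g : A ⟶ B) (rg : RegularEpi g) : RegularEpi (i ≫ g) where
  W := rg.W
  left := rg.left ≫ inv i
  right := rg.right ≫ inv i
  w := by simp [rg.w]
  isColimit := by
    refine Cofork.IsColimit.mk' _ fun s => ?_
    have hs : rg.left ≫ inv i ≫ s.π = rg.right ≫ inv i ≫ s.π := by
      have := s.condition
      simpa using this
    obtain ⟨d, hd⟩ := Cofork.IsColimit.desc' rg.isColimit (inv i ≫ s.π) hs
    rw [Cofork.π_ofπ] at hd
    refine ⟨d, by rw [Cofork.π_ofπ, Category.assoc, hd, IsIso.hom_inv_id_assoc], fun {m} hm => ?_⟩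
    apply Cofork.IsColimit.hom_ext rg.isColimit
    rw [Cofork.π_ofπ]
    rw [hd, ← hm]
    simp

lemma isPullback_id_mono {C : Type*} [Category C] {Z I Y : C} (k : Z ⟶ I) (m : I ⟶ Y)
    [Mono m] : IsPullback k (𝟙 Z) m (k ≫ m) := by
  refine IsPullback.of_isLimit (c := PullbackCone.mk k (𝟙 Z) (by simp)) ?_
  refine PullbackCone.IsLimit.mk _ (fun s => s.snd) (fun s => ?_) (fun s => by simp)
    (fun s l h1 h2 => by simpa using h2)
  · have := s.condition
    rw [← cancel_mono m]
    simpa using this.symm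

/-- In a category with pullbacks in which regular epimorphisms are stable under pullback,
if `f = e ≫ m` with `e` a regular epimorphism and `m` a monomorphism, then for every
`h : Z ⟶ Y` the base change of `f` along `h` is a regular epimorphism if and only if `h`
factors through `m`. -/
theorem baseChange_regularEpi_iff_factors
    {B : Type*} [Category B] [HasPullbacks B]
    (hstab : ∀ {X Y Z : B} (f : X ⟶ Y) (g : Z ⟶ Y),
      RegularEpi f → RegularEpi (pullback.snd f g))
    {X Y I : B} (f : X ⟶ Y) (e : X ⟶ I) (m : I ⟶ Y)
    (he : RegularEpi e) [Mono m] (hf : f = e ≫ m)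
    {Z : B} (h : Z ⟶ Y) :
    Nonempty (RegularEpi (pullback.snd f h)) ↔ ∃ k : Z ⟶ I, k ≫ m = h := by
  constructor
  · rintro ⟨re⟩
    have : StrongEpi (pullback.snd f h) := by
      haveI : IsRegularEpi (pullback.snd f h) := ⟨⟨re⟩⟩; infer_instance
    have sq : CommSq (pullback.fst f h ≫ e) (pullback.snd f h) m h := by
      constructor
      rw [Category.assoc, ← hf, pullback.condition]
    exact ⟨sq.lift, sq.fac_right⟩
  · rintro ⟨k, hk⟩
    -- the pullback of f along h is also the pullback of e along k
    have big : IsPullback (pullback.fst f h) (pullback.snd f h ≫ 𝟙 Z) (e ≫ m) h := by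
      simpa [← hf] using IsPullback.of_hasPullback f h
    have t : IsPullback k (𝟙 Z) m h := by
      have := isPullback_id_mono k m
      rwa [hk] at this
    have sq : IsPullback (pullback.fst f h) (pullback.snd f h) e k := by
      refine IsPullback.of_bot big ?_ t
      rw [← cancel_mono m, Category.assoc, Category.assoc, ← hf, hk, pullback.condition]
    have hek : RegularEpi (pullback.snd e k) := hstab e k he
    have : pullback.snd f h = sq.isoPullback.hom ≫ pullback.snd e k := by
      rw [sq.isoPullback_hom_snd]
    rw [this]
    exact ⟨regularEpiIsoComp _ _ hek⟩
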